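/- arXiv:2101.10990 — 5 statements merged into one kernel-verified Lean document; each statement's English description precedes it below -/
import Mathlib

section
/- Let n, k be integers and define binom(n,k) = 0 for k < 0 and the usual binomial coefficient (extended to negative n via binom(n,k) = n(n-1)...(n-k+1)/k! for k ≥ 0). Then binom(n,k) - binom(n,n-k) = (-1)^k * binom(k-n-1, -n-1) for all integers n and k. -/
/-- Generalized binomial coefficient `binom(n,k)` for integers `n, k`:
`n(n-1)⋯(n-k+1)/k!` for `k ≥ 0`, and `0` for `k < 0`. -/
noncomputable def ibinom (n k : ℤ) : ℚ :=
  if k < 0 then 0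
  else (∏ i ∈ Finset.range k.toNat, ((n : ℚ) - i)) / (Nat.factorial k.toNat : ℚ)

lemma cast_prod_desc (M K : ℕ) :
    ∏ i ∈ Finset.range K, ((M : ℚ) - i) = (M.descFactorial K : ℚ) := by
  rcases le_or_gt K M with h | h
  · rw [Nat.descFactorial_eq_prod_range, Nat.cast_prod]
    refine Finset.prod_congr rfl fun i hi => ?_
    rw [Nat.cast_sub (le_trans (Nat.le_of_lt_succ (Nat.lt_succ_of_lt (Finset.mem_range.mp hi))) h)]
  · rw [Nat.descFactorial_eq_zero_iff_lt.mpr h, Nat.cast_zero]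
    exact Finset.prod_eq_zero (Finset.mem_range.mpr h) (by simp)

lemma prod_desc_reflect (x : ℚ) (m : ℕ) :
    ∏ i ∈ Finset.range m, (x - i) =
      (-1 : ℚ) ^ m * ∏ i ∈ Finset.range m, ((m : ℚ) - 1 - x - i) := by
  have : ∏ i ∈ Finset.range m, ((m : ℚ) - 1 - x - i) =
      ∏ i ∈ Finset.range m, (-(x - i)) := by
    rw [← Finset.prod_range_reflect fun i => -(x - i)]
    refine Finset.prod_congr rfl fun i hi => ?_
    have hi' := Finset.mem_range.mp hi
    have : ((m - 1 - i : ℕ) : ℚ) = (m : ℚ) - 1 - i := by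
      have : (1 : ℕ) + i ≤ m := by omega
      push_cast [Nat.sub_sub, Nat.cast_sub this]
      ring
    rw [this]; ring
  rw [this, Finset.prod_congr rfl fun (i : ℕ) _ => (neg_one_mul (x - (i : ℚ))).symm,
    Finset.prod_mul_distrib, Finset.prod_const, Finset.card_range, ← mul_assoc, ← mul_pow]
  norm_num

/-- ibinom as a Nat.choose for nonneg arguments -/
lemma ibinom_nonneg_eq (n k : ℤ) (hk : 0 ≤ k) :
    ibinom n k = (∏ i ∈ Finset.range k.toNat, ((n : ℚ) - i)) / (Nat.factorial k.toNat : ℚ) := by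
  rw [ibinom, if_neg (by omega)]

lemma ibinom_of_neg (n k : ℤ) (hk : k < 0) : ibinom n k = 0 := by
  rw [ibinom, if_pos hk]

lemma ibinom_zero_of_lt (m k : ℤ) (hm : 0 ≤ m) (h : m < k) : ibinom m k = 0 := by
  rw [ibinom_nonneg_eq _ _ (by omega)]
  have : (m : ℚ) = ((m.toNat : ℕ) : ℚ) := by exact_mod_cast (Int.toNat_of_nonneg hm).symm
  rw [this, cast_prod_desc, Nat.descFactorial_eq_zero_iff_lt.mpr (by omega)]
  simp

lemma ibinom_symm (m k : ℤ) (hk : 0 ≤ k) (h : k ≤ m) :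
    ibinom m k = ibinom m (m - k) := by
  have hm : 0 ≤ m := le_trans hk h
  rw [ibinom_nonneg_eq _ _ hk, ibinom_nonneg_eq _ _ (by omega)]
  have hmc : (m : ℚ) = ((m.toNat : ℕ) : ℚ) := by exact_mod_cast (Int.toNat_of_nonneg hm).symm
  have hsub : (m - k).toNat = m.toNat - k.toNat := by omega
  have hle : k.toNat ≤ m.toNat := by omega
  rw [hmc, cast_prod_desc, hsub, cast_prod_desc,
    Nat.descFactorial_eq_factorial_mul_choose, Nat.descFactorial_eq_factorial_mul_choose,
    Nat.choose_symm hle]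
  have h1 : ((k.toNat).factorial : ℚ) ≠ 0 := by positivity
  have h2 : ((m.toNat - k.toNat).factorial : ℚ) ≠ 0 := by positivity
  field_simp
  push_cast; ring

/-- upper negation -/
lemma ibinom_neg (n k : ℤ) (hk : 0 ≤ k) :
    ibinom n k = (-1 : ℚ) ^ k.toNat * ibinom (k - n - 1) k := by
  rw [ibinom_nonneg_eq _ _ hk, ibinom_nonneg_eq _ _ hk, prod_desc_reflect]
  have : ∀ i : ℕ, ((k.toNat : ℚ) : ℚ) - 1 - n - i = ((k - n - 1 : ℤ) : ℚ) - i := by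
    intro i
    have : ((k.toNat : ℕ) : ℚ) = (k : ℚ) := by
      rw [← Int.cast_natCast, Int.toNat_of_nonneg hk]
    rw [this]; push_cast; ring
  rw [Finset.prod_congr rfl fun i _ => this i]
  ring

lemma neg_one_zpow_cast (a : ℤ) (ha : 0 ≤ a) : (-1 : ℚ) ^ a = (-1 : ℚ) ^ a.toNat := by
  rw [← Int.toNat_of_nonneg ha, zpow_natCast, Int.toNat_of_nonneg ha]

lemma neg_one_zpow_congr (a b : ℤ) (h : a % 2 = b % 2) : (-1 : ℚ) ^ a = (-1 : ℚ) ^ b := by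
  have : a = b + 2 * ((a - b) / 2) := by omega
  rw [this, zpow_add₀ (by norm_num), zpow_mul]
  norm_num

theorem binom_reflection_identity (n k : ℤ) :
    ibinom n k - ibinom n (n - k) = (-1 : ℚ) ^ k * ibinom (k - n - 1) (-n - 1) := by
  rcases lt_or_ge k 0 with hk | hk
  · rw [ibinom_of_neg _ _ hk]
    rcases lt_or_ge (n - k) 0 with h2 | h2
    · -- n < k < 0
      rw [ibinom_of_neg _ _ h2, ibinom_zero_of_lt _ _ (by omega) (by omega)]
      ring
    · rcases le_or_gt 0 n with hn | hn
      · -- 0 ≤ n, k < 0 : everything vanishes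
        rw [ibinom_zero_of_lt _ _ hn (by omega), ibinom_of_neg _ _ (by omega)]
        ring
      · -- n < 0, k ≤ n : the interesting negative case
        rw [ibinom_neg n (n - k) (by omega), ibinom_neg (k - n - 1) (-n - 1) (by omega)]
        have h1 : (n - k) - n - 1 = -k - 1 := by ring
        have h2' : (-n - 1) - (k - n - 1) - 1 = -k - 1 := by ring
        rw [h1, h2']
        rw [ibinom_symm (-k - 1) (n - k) (by omega) (by omega)]
        have h3 : (-k - 1) - (n - k) = -n - 1 := by ring
        rw [h3]
        rw [show (-1 : ℚ) ^ (n - k).toNat = (-1 : ℚ) ^ (n - k) from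
          (neg_one_zpow_cast _ (by omega)).symm]
        rw [show (-1 : ℚ) ^ (-n - 1).toNat = (-1 : ℚ) ^ (-n - 1) from
          (neg_one_zpow_cast _ (by omega)).symm]
        have hsign : (-1 : ℚ) ^ k * (-1 : ℚ) ^ (-n - 1) = -((-1 : ℚ) ^ (n - k)) := by
          rw [← zpow_add₀ (show (-1 : ℚ) ≠ 0 by norm_num),
            neg_one_zpow_congr (k + (-n - 1)) (n - k + 1) (by omega),
            zpow_add₀ (show (-1 : ℚ) ≠ 0 by norm_num), zpow_one]
          ring
        linear_combination (-ibinom (-k - 1) (-n - 1)) * hsign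
  · -- 0 ≤ k
    rcases le_or_gt 0 n with hn | hn
    · -- 0 ≤ n : RHS vanishes
      rw [ibinom_of_neg (k - n - 1) (-n - 1) (by omega)]
      rcases le_or_gt k n with hkn | hkn
      · rw [ibinom_symm n k hk hkn]; ring
      · rw [ibinom_zero_of_lt n k hn hkn, ibinom_of_neg n (n - k) (by omega)]; ring
    · -- n < 0, 0 ≤ k
      rw [ibinom_of_neg n (n - k) (by omega), ibinom_neg n k hk,
        ibinom_symm (k - n - 1) k hk (by omega)]
      have h3 : (k - n - 1) - k = -n - 1 := by ring
      rw [h3, show (-1 : ℚ) ^ k.toNat = (-1 : ℚ) ^ k from (neg_one_zpow_cast _ hk).symm]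
      ring
end

section
/- Let R = ℚ[z₀, z₁, z₂, …] be bigraded with |z_k| = (1,k), ∂ the derivation with ∂(z_k) = z_{k-1} (k ≥ 1), ∂(z₀) = 0, γ = ∑_{k≥0} (-1)^k z_k ∂^k, and ε the constant-term homomorphism. For every bidegree (d,e) ≠ (0,0), the sequence R^{d-1,e} →^γ R^{d,e} →^∂ R^{d,e-1} →^ε ℚ[0]^{d,e-1} → 0 is exact, where ℚ[0]^{d,e-1} is ℚ if (d,e-1) = (0,0) and 0 otherwise. -/
open MvPolynomial

/-- A polynomial in `R = ℚ[z₀, z₁, …]` is bihomogeneous of bidegree `(d, e)` if every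
monomial `z_{k₁}⋯z_{k_d}` in it has total degree `d` and weight `k₁ + … + k_d = e`. -/
def Bihom (d e : ℤ) (P : MvPolynomial ℕ ℚ) : Prop :=
  ∀ m ∈ P.support, (m.sum fun _ n => (n : ℤ)) = d ∧ (m.sum fun k n => (k : ℤ) * n) = e

/-- `γ = ∑_{k≥0} (-1)^k z_k ∂^k` (a finite sum on each element). -/
noncomputable def gammaMap (D : Derivation ℚ (MvPolynomial ℕ ℚ) (MvPolynomial ℕ ℚ))
    (P : MvPolynomial ℕ ℚ) : MvPolynomial ℕ ℚ :=
  ∑ᶠ k : ℕ, ((-1 : ℚ) ^ k) • (X k * (⇑D)^[k] P)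

namespace BigradedAux

abbrev Rr := MvPolynomial ℕ ℚ

/-- total degree of a monomial, as an integer -/
def degI (m : ℕ →₀ ℕ) : ℤ := m.sum fun _ n => (n : ℤ)
/-- weight of a monomial, as an integer -/
def wdegI (m : ℕ →₀ ℕ) : ℤ := m.sum fun k n => (k : ℤ) * n

lemma bihom_def {d e : ℤ} {P : Rr} :
    Bihom d e P ↔ ∀ m ∈ P.support, degI m = d ∧ wdegI m = e := Iff.rfl

lemma degI_add (m m' : ℕ →₀ ℕ) : degI (m + m') = degI m + degI m' :=
  Finsupp.sum_add_index' (fun _ => by simp) (fun _ _ _ => by push_cast; ring)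

lemma wdegI_add (m m' : ℕ →₀ ℕ) : wdegI (m + m') = wdegI m + wdegI m' :=
  Finsupp.sum_add_index' (fun _ => by simp) (fun _ _ _ => by push_cast; ring)

lemma degI_single (a n : ℕ) : degI (Finsupp.single a n) = n := by
  simp [degI, Finsupp.sum_single_index]

lemma wdegI_single (a n : ℕ) : wdegI (Finsupp.single a n) = a * n := by
  simp [wdegI, Finsupp.sum_single_index]

@[simp] lemma degI_zero : degI 0 = 0 := rfl
@[simp] lemma wdegI_zero : wdegI 0 = 0 := rfl

lemma degI_nonneg (m : ℕ →₀ ℕ) : 0 ≤ degI m := by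
  apply Finset.sum_nonneg; intro i _; positivity

lemma wdegI_nonneg (m : ℕ →₀ ℕ) : 0 ≤ wdegI m := by
  apply Finset.sum_nonneg; intro i _; positivity

lemma bihom_zero (d e : ℤ) : Bihom d e 0 := by
  intro m hm; simp at hm

lemma bihom_add {d e : ℤ} {P Q : Rr} (hP : Bihom d e P) (hQ : Bihom d e Q) :
    Bihom d e (P + Q) := by
  intro m hm
  rcases Finset.mem_union.mp (MvPolynomial.support_add hm) with h | h
  · exact hP m h
  · exact hQ m h

lemma bihom_smul {d e : ℤ} {c : ℚ} {P : Rr} (hP : Bihom d e P) : Bihom d e (c • P) := by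
  intro m hm
  exact hP m (MvPolynomial.support_smul hm)

lemma bihom_nsmul {d e : ℤ} {n : ℕ} {P : Rr} (hP : Bihom d e P) : Bihom d e (n • P) := by
  intro m hm
  exact hP m (MvPolynomial.support_smul hm)

lemma bihom_neg {d e : ℤ} {P : Rr} (hP : Bihom d e P) : Bihom d e (-P) := by
  intro m hm
  rw [MvPolynomial.support_neg] at hm
  exact hP m hm

lemma bihom_sub {d e : ℤ} {P Q : Rr} (hP : Bihom d e P) (hQ : Bihom d e Q) :
    Bihom d e (P - Q) := by
  rw [sub_eq_add_neg]
  exact bihom_add hP (bihom_neg hQ)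

lemma bihom_sum {ι : Type*} {d e : ℤ} {s : Finset ι} {f : ι → Rr}
    (h : ∀ i ∈ s, Bihom d e (f i)) : Bihom d e (∑ i ∈ s, f i) := by
  classical
  induction s using Finset.induction_on with
  | empty => simpa using bihom_zero d e
  | insert a s hni ih =>
    rw [Finset.sum_insert hni]
    exact bihom_add (h a (Finset.mem_insert_self a s))
      (ih fun i hi => h i (Finset.mem_insert_of_mem hi))

lemma bihom_mul {d₁ e₁ d₂ e₂ : ℤ} {P Q : Rr} (hP : Bihom d₁ e₁ P) (hQ : Bihom d₂ e₂ Q) :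
    Bihom (d₁ + d₂) (e₁ + e₂) (P * Q) := by
  intro m hm
  obtain ⟨m₁, hm₁, m₂, hm₂, rfl⟩ := Finset.mem_add.mp (MvPolynomial.support_mul P Q hm)
  obtain ⟨h1, h2⟩ := hP m₁ hm₁
  obtain ⟨h3, h4⟩ := hQ m₂ hm₂
  have e1 : degI m₁ = d₁ := h1
  have e2 : wdegI m₁ = e₁ := h2
  have e3 : degI m₂ = d₂ := h3
  have e4 : wdegI m₂ = e₂ := h4
  constructor
  · show degI (m₁ + m₂) = d₁ + d₂
    rw [degI_add, e1, e3]
  · show wdegI (m₁ + m₂) = e₁ + e₂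
    rw [wdegI_add, e2, e4]

lemma bihom_monomial {d e : ℤ} (m : ℕ →₀ ℕ) (c : ℚ) (h1 : degI m = d) (h2 : wdegI m = e) :
    Bihom d e (monomial m c) := by
  intro m' hm'
  have := MvPolynomial.support_monomial_subset hm'
  simp only [Finset.mem_singleton] at this
  subst this
  exact ⟨h1, h2⟩

lemma bihom_X (k : ℕ) : Bihom 1 k (X k : Rr) := by
  rw [MvPolynomial.X]
  exact bihom_monomial _ _ (by simp [degI_single]) (by simp [wdegI_single])

lemma bihom_C (c : ℚ) : Bihom 0 0 (C c : Rr) := by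
  rw [MvPolynomial.C_apply]
  exact bihom_monomial _ _ (by simp) (by simp)

lemma bihom_zero_of_neg {d e : ℤ} {P : Rr} (hP : Bihom d e P) (h : d < 0 ∨ e < 0) :
    P = 0 := by
  rw [← MvPolynomial.support_eq_empty, Finset.eq_empty_iff_forall_notMem]
  intro m hm
  obtain ⟨h1, h2⟩ := hP m hm
  have e1 : degI m = d := h1
  have e2 : wdegI m = e := h2
  have := degI_nonneg m
  have := wdegI_nonneg m
  omega

lemma finsupp_eq_zero_of_degI {m : ℕ →₀ ℕ} (h : degI m = 0) : m = 0 := by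
  ext k
  simp only [Finsupp.coe_zero, Pi.zero_apply]
  by_contra hk
  have hks : k ∈ m.support := Finsupp.mem_support_iff.mpr hk
  have hle : (m k : ℤ) ≤ ∑ j ∈ m.support, ((m j : ℤ)) :=
    Finset.single_le_sum (f := fun j => ((m j : ℤ))) (fun i _ => by positivity) hks
  have hq : degI m = ∑ j ∈ m.support, ((m j : ℤ)) := rfl
  omega

lemma bihom_d0 {e : ℤ} {P : Rr} (hP : Bihom 0 e P) (he : e ≠ 0) : P = 0 := by
  rw [← MvPolynomial.support_eq_empty, Finset.eq_empty_iff_forall_notMem]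
  intro m hm
  obtain ⟨h1, h2⟩ := hP m hm
  have e1 : degI m = 0 := h1
  have e2 : wdegI m = e := h2
  have hm0 : m = 0 := by
    ext k
    simp only [Finsupp.coe_zero, Pi.zero_apply]
    by_contra hk
    have hks : k ∈ m.support := Finsupp.mem_support_iff.mpr hk
    have hle : (m k : ℤ) ≤ ∑ j ∈ m.support, ((m j : ℤ)) :=
      Finset.single_le_sum (f := fun j => ((m j : ℤ))) (fun i _ => by positivity) hks
    have hq : degI m = ∑ j ∈ m.support, ((m j : ℤ)) := rfl
    omega
  rw [hm0] at e2
  rw [wdegI_zero] at e2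
  exact he e2.symm

lemma eq_monomial_of_support_subset {P : Rr} {m : ℕ →₀ ℕ}
    (h : P.support ⊆ {m}) : P = monomial m (coeff m P) := by
  ext m'
  rw [MvPolynomial.coeff_monomial]
  split
  · next heq => subst heq; rfl
  · next hne =>
    by_contra hc
    have : m' ∈ P.support := Finsupp.mem_support_iff.mpr (by exact hc)
    have := h this
    simp only [Finset.mem_singleton] at this
    exact hne this.symm

lemma bihom_of_X0_mul {d e : ℤ} {P : Rr} (h : Bihom d e (X 0 * P)) :
    Bihom (d - 1) e P := by
  intro m hm
  have hc : coeff (Finsupp.single 0 1 + m) (X 0 * P) = coeff m P :=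
    MvPolynomial.coeff_X_mul m 0 P
  have hmem : Finsupp.single 0 1 + m ∈ (X 0 * P).support := by
    rw [MvPolynomial.mem_support_iff, hc]
    exact MvPolynomial.mem_support_iff.mp hm
  obtain ⟨h1, h2⟩ := h _ hmem
  have e1 : degI (Finsupp.single 0 1 + m) = d := h1
  have e2 : wdegI (Finsupp.single 0 1 + m) = e := h2
  rw [degI_add, degI_single] at e1
  rw [wdegI_add, wdegI_single] at e2
  constructor
  · show degI m = d - 1
    push_cast at e1; omega
  · show wdegI m = e
    push_cast at e2; omega

lemma X0_mul_monomial (m : ℕ →₀ ℕ) (c : ℚ) :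
    (X 0 : Rr) * monomial m c = monomial (Finsupp.single 0 1 + m) c := by
  rw [MvPolynomial.X, MvPolynomial.monomial_mul, one_mul]

lemma bihom_congr {d e d' e' : ℤ} {P : Rr} (h : Bihom d e P) (hd : d = d') (he : e = e') :
    Bihom d' e' P := by subst hd; subst he; exact h

lemma bihom_X_pow (a n : ℕ) : Bihom n (a * n) ((X a : Rr) ^ n) := by
  rw [MvPolynomial.X_pow_eq_monomial]
  exact bihom_monomial _ _ (degI_single a n) (wdegI_single a n)

lemma monomial_single_add (a n : ℕ) (f : ℕ →₀ ℕ) (c : ℚ) :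
    (monomial (Finsupp.single a n + f) c : Rr) = X a ^ n * monomial f c := by
  rw [MvPolynomial.X_pow_eq_monomial, MvPolynomial.monomial_mul, one_mul]

section Derivs

variable (D : Derivation ℚ Rr Rr)

lemma derivation_C (q : ℚ) : D (C q) = 0 := by
  have : (C q : Rr) = algebraMap ℚ Rr q := rfl
  rw [this, Derivation.map_algebraMap]

lemma bihom_deriv_general (t : ℤ) (hval : ∀ k : ℕ, Bihom 1 (k + t) (D (X k)))
    {d e : ℤ} {P : Rr} (hP : Bihom d e P) : Bihom d (e + t) (D P) := by
  have key : ∀ (m : ℕ →₀ ℕ) (c : ℚ), Bihom (degI m) (wdegI m + t) (D (monomial m c)) := by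
    intro m
    induction m using Finsupp.induction with
    | zero =>
      intro c
      rw [MvPolynomial.monomial_zero', derivation_C]
      exact bihom_zero _ _
    | single_add a n f han hn ih =>
      intro c
      rw [monomial_single_add, Derivation.leibniz, smul_eq_mul, smul_eq_mul]
      apply bihom_add
      · exact bihom_congr (bihom_mul (bihom_X_pow a n) (ih c))
          (by rw [degI_add, degI_single])
          (by rw [wdegI_add, wdegI_single]; ring)
      · rw [Derivation.leibniz_pow, mul_smul_comm]
        apply bihom_nsmul
        rw [smul_eq_mul, ← mul_assoc]
        have h1 : 1 ≤ n := Nat.one_le_iff_ne_zero.mpr hn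
        refine bihom_congr
          (bihom_mul (bihom_mul (bihom_monomial f c rfl rfl) (bihom_X_pow a (n-1)))
            (hval a)) ?_ ?_
        · rw [degI_add, degI_single]
          push_cast [Nat.cast_sub h1]
          ring
        · rw [wdegI_add, wdegI_single]
          push_cast [Nat.cast_sub h1]
          ring
  have hsum : D P = ∑ m ∈ P.support, D (monomial m (coeff m P)) := by
    conv_lhs => rw [P.as_sum]
    exact map_sum D.toLinearMap _ _
  rw [hsum]
  apply bihom_sum
  intro m hm
  obtain ⟨h1, h2⟩ := hP m hm
  have e1 : degI m = d := h1
  have e2 : wdegI m = e := h2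
  exact bihom_congr (key m _) e1 (by rw [e2])

variable (hD0 : D (X 0) = 0) (hD : ∀ k : ℕ, D (X (k + 1)) = X k)

include hD0 hD in
lemma bihom_D {d e : ℤ} {P : Rr} (hP : Bihom d e P) : Bihom d (e - 1) (D P) := by
  have hval : ∀ k : ℕ, Bihom 1 (k + (-1)) (D (X k)) := by
    intro k
    cases k with
    | zero => rw [hD0]; exact bihom_zero _ _
    | succ j => rw [hD j]; exact bihom_congr (bihom_X j) rfl (by push_cast; ring)
  exact bihom_congr (bihom_deriv_general D (-1) hval hP) rfl (by ring)

include hD0 hD in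
lemma bihom_D_iter {d e : ℤ} {P : Rr} (hP : Bihom d e P) (k : ℕ) :
    Bihom d (e - k) ((⇑D)^[k] P) := by
  induction k with
  | zero => simpa using hP
  | succ j ih =>
    rw [Function.iterate_succ_apply']
    exact bihom_congr (bihom_D D hD0 hD ih) rfl (by push_cast; ring)

lemma D_iter_zero (k : ℕ) : (⇑D)^[k] (0 : Rr) = 0 := by
  induction k with
  | zero => rfl
  | succ j ih => rw [Function.iterate_succ_apply', ih, map_zero]

lemma D_iter_add (k : ℕ) (P Q : Rr) :
    (⇑D)^[k] (P + Q) = (⇑D)^[k] P + (⇑D)^[k] Q := by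
  induction k with
  | zero => rfl
  | succ j ih => simp only [Function.iterate_succ_apply', ih, map_add]

include hD0 hD in
lemma D_iter_eq_zero {d e : ℤ} {P : Rr} (hP : Bihom d e P) {k : ℕ} (h : e < k) :
    (⇑D)^[k] P = 0 := by
  exact bihom_zero_of_neg (bihom_D_iter D hD0 hD hP k) (Or.inr (by omega))

/-- the raising derivation `E z_k = (k+1) z_{k+1}` -/
noncomputable def Ederiv : Derivation ℚ Rr Rr :=
  mkDerivation ℚ fun k => ((k : ℚ) + 1) • X (k + 1)

/-- the Euler derivation `N z_k = z_k` -/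
noncomputable def Nderiv : Derivation ℚ Rr Rr :=
  mkDerivation ℚ fun k => X k

lemma Ederiv_X (k : ℕ) : Ederiv (X k) = ((k : ℚ) + 1) • X (k + 1) := by
  rw [Ederiv, mkDerivation_X]

lemma Nderiv_X (k : ℕ) : Nderiv (X k) = X k := by
  rw [Nderiv, mkDerivation_X]

lemma bihom_E {d e : ℤ} {P : Rr} (hP : Bihom d e P) : Bihom d (e + 1) (Ederiv P) := by
  have hval : ∀ k : ℕ, Bihom 1 (k + 1) (Ederiv (X k)) := by
    intro k
    rw [Ederiv_X]
    exact bihom_congr (bihom_smul (bihom_X (k+1))) rfl (by push_cast; ring)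
  exact bihom_deriv_general Ederiv 1 hval hP

lemma bihom_E_iter {d e : ℤ} {P : Rr} (hP : Bihom d e P) (k : ℕ) :
    Bihom d (e + k) ((⇑Ederiv)^[k] P) := by
  induction k with
  | zero => simpa using hP
  | succ j ih =>
    rw [Function.iterate_succ_apply']
    exact bihom_congr (bihom_E ih) rfl (by push_cast; ring)

lemma E_iter_zero (k : ℕ) : (⇑Ederiv)^[k] (0 : Rr) = 0 := by
  induction k with
  | zero => rfl
  | succ j ih => rw [Function.iterate_succ_apply', ih, map_zero]

lemma euler {d e : ℤ} {P : Rr} (hP : Bihom d e P) : Nderiv P = (d : ℚ) • P := by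
  have key : ∀ (m : ℕ →₀ ℕ) (c : ℚ),
      Nderiv (monomial m c) = ((degI m : ℤ) : ℚ) • monomial m c := by
    intro m
    induction m using Finsupp.induction with
    | zero =>
      intro c
      rw [MvPolynomial.monomial_zero', derivation_C]
      simp
    | single_add a n f han hn ih =>
      intro c
      obtain ⟨n', rfl⟩ : ∃ n', n = n' + 1 := ⟨n - 1, by omega⟩
      rw [monomial_single_add, Derivation.leibniz, Derivation.leibniz_pow, ih,
        Nderiv_X, degI_add, degI_single]
      simp only [smul_eq_mul, ← Nat.cast_smul_eq_nsmul ℚ,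
        MvPolynomial.smul_eq_C_mul, Nat.add_sub_cancel]
      push_cast
      simp only [MvPolynomial.C_add, MvPolynomial.C_1]
      ring
  have hsum : Nderiv P = ∑ m ∈ P.support, Nderiv (monomial m (coeff m P)) := by
    conv_lhs => rw [P.as_sum]
    exact map_sum Nderiv.toLinearMap _ _
  rw [hsum]
  have : ∀ m ∈ P.support, Nderiv (monomial m (coeff m P))
      = (d : ℚ) • monomial m (coeff m P) := by
    intro m hm
    have e1 : degI m = d := (hP m hm).1
    rw [key m _, e1]
  rw [Finset.sum_congr rfl this, ← Finset.smul_sum, ← P.as_sum]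

include hD0 hD in
lemma DE_comm (P : Rr) : D (Ederiv P) = Ederiv (D P) + Nderiv P := by
  induction P using MvPolynomial.induction_on with
  | C q => simp [derivation_C]
  | add p q ihp ihq =>
    simp only [map_add, ihp, ihq]
    abel
  | mul_X p n ih =>
    have hgen : D (Ederiv (X n)) = Ederiv (D (X n)) + Nderiv (X n) := by
      cases n with
      | zero =>
        rw [Ederiv_X, Nderiv_X, hD0, Derivation.map_smul, map_zero, hD]
        push_cast
        simp
      | succ j =>
        rw [Ederiv_X, Nderiv_X, hD j, Derivation.map_smul, Ederiv_X,
          hD (j+1)]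
        push_cast
        rw [add_smul, one_smul]
    simp only [Derivation.leibniz, smul_eq_mul, map_add, ih, hgen]
    ring

include hD0 hD in
lemma DE_iter {d e : ℤ} (m : ℕ) {P : Rr} (hP : Bihom d e P) :
    D ((⇑Ederiv)^[m + 1] P) =
      (⇑Ederiv)^[m + 1] (D P) + (((m : ℚ) + 1) * d) • (⇑Ederiv)^[m] P := by
  induction m with
  | zero =>
    simp only [zero_add, Function.iterate_one, Function.iterate_zero, id_eq]
    rw [DE_comm D hD0 hD, euler hP]
    norm_num
  | succ j ih =>
    have h1 : (⇑Ederiv)^[j + 1 + 1] P = Ederiv ((⇑Ederiv)^[j + 1] P) :=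
      Function.iterate_succ_apply' _ _ _
    rw [h1, DE_comm D hD0 hD, ih, euler (bihom_E_iter hP (j+1)), map_add,
      Derivation.map_smul]
    have h2 : Ederiv ((⇑Ederiv)^[j + 1] (D P)) = (⇑Ederiv)^[j + 1 + 1] (D P) :=
      (Function.iterate_succ_apply' _ _ _).symm
    have h3 : Ederiv ((⇑Ederiv)^[j] P) = (⇑Ederiv)^[j + 1] P :=
      (Function.iterate_succ_apply' _ _ _).symm
    rw [h2, h3]
    push_cast
    rw [add_assoc, ← add_smul]
    ring_nf

include hD0 hD in
lemma surjD {d w : ℤ} (hd : 1 ≤ d) {P : Rr} (hP : Bihom d w P) :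
    ∃ Q : Rr, Bihom d (w + 1) Q ∧ D Q = P := by
  classical
  have hdq : (d : ℚ) ≠ 0 := by
    simp only [ne_eq, Int.cast_eq_zero]; omega
  set M := w.toNat with hM
  set c : ℕ → ℚ := fun i => (-1)^i / ((d:ℚ)^(i+1) * (Nat.factorial (i+1))) with hc
  set u : ℕ → Rr := fun i => (⇑Ederiv)^[i] ((⇑D)^[i] P) with hu
  have hu0 : u 0 = P := rfl
  have huM : u (M+1) = 0 := by
    rw [hu]
    simp only
    rw [D_iter_eq_zero D hD0 hD hP (by omega), E_iter_zero]
  have hkey : ∀ i : ℕ, c (i+1) * (((((i+1:ℕ):ℚ)) + 1) * d) = - c i := by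
    intro i
    simp only [hc]
    rw [pow_succ (-1:ℚ) i, pow_succ (d:ℚ) (i+1), Nat.factorial_succ (i+1)]
    push_cast
    have hfac : ((Nat.factorial (i+1) : ℚ)) ≠ 0 := by
      exact_mod_cast Nat.factorial_ne_zero (i+1)
    have hdp : (d:ℚ)^(i+1) ≠ 0 := pow_ne_zero _ hdq
    field_simp
  have hkey0 : c 0 * ((((0:ℕ):ℚ) + 1) * d) = 1 := by
    simp only [hc]
    push_cast
    field_simp
    norm_num [Nat.factorial]
  refine ⟨∑ i ∈ Finset.range (M+1), c i • (⇑Ederiv)^[i+1] ((⇑D)^[i] P), ?_, ?_⟩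
  · apply bihom_sum
    intro i _
    exact bihom_smul (bihom_congr
      (bihom_E_iter (bihom_D_iter D hD0 hD hP i) (i+1)) rfl (by push_cast; ring))
  · have hDsum : D (∑ i ∈ Finset.range (M+1), c i • (⇑Ederiv)^[i+1] ((⇑D)^[i] P))
        = ∑ i ∈ Finset.range (M+1), D (c i • (⇑Ederiv)^[i+1] ((⇑D)^[i] P)) :=
      map_sum D.toLinearMap _ _
    rw [hDsum]
    have hterm : ∀ i, D (c i • (⇑Ederiv)^[i+1] ((⇑D)^[i] P))
        = c i • u (i+1) + (c i * (((i:ℚ)+1) * d)) • u i := by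
      intro i
      rw [Derivation.map_smul, DE_iter D hD0 hD i (bihom_D_iter D hD0 hD hP i),
        smul_add, smul_smul]
      have : Ederiv^[i+1] (D ((⇑D)^[i] P)) = u (i+1) := by
        rw [hu]
        simp only
        rw [← Function.iterate_succ_apply' (⇑D) i P]
      rw [this]
    rw [Finset.sum_congr rfl (fun i _ => hterm i), Finset.sum_add_distrib]
    have h1 : ∑ i ∈ Finset.range (M+1), c i • u (i+1)
        = ∑ i ∈ Finset.range M, c i • u (i+1) := by
      rw [Finset.sum_range_succ, huM, smul_zero, add_zero]
    have h2 : ∑ i ∈ Finset.range (M+1), (c i * (((i:ℚ)+1) * d)) • u i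
        = P - ∑ i ∈ Finset.range M, c i • u (i+1) := by
      rw [Finset.sum_range_succ']
      have hf0 : (c 0 * ((((0:ℕ):ℚ)+1) * d)) • u 0 = P := by
        rw [hkey0, hu0, one_smul]
      have hfi : ∀ i, (c (i+1) * (((((i+1:ℕ):ℚ))+1) * d)) • u (i+1)
          = - (c i • u (i+1)) := by
        intro i
        rw [hkey i, neg_smul]
      rw [Finset.sum_congr rfl (fun i _ => hfi i), hf0, Finset.sum_neg_distrib]
      abel
    rw [h1, h2]
    abel

end Derivs

section PhiPsi

/-- shift-down-and-kill-z₀ algebra map: `z₀ ↦ 0`, `z_{k+1} ↦ z_k`. -/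
noncomputable def Phi : Rr →ₐ[ℚ] Rr :=
  aeval fun k => match k with
    | 0 => 0
    | (j + 1) => X j

/-- shift-up algebra map `z_k ↦ z_{k+1}`. -/
noncomputable def Psi : Rr →ₐ[ℚ] Rr := rename Nat.succ

lemma Phi_X0 : Phi (X 0) = 0 := by
  rw [Phi, aeval_X]

lemma Phi_X_succ (j : ℕ) : Phi (X (j + 1)) = X j := by
  rw [Phi, aeval_X]

lemma Phi_Psi (P : Rr) : Phi (Psi P) = P := by
  rw [Phi, Psi, aeval_rename]
  have h : ((fun k => match k with | 0 => (0:Rr) | (j+1) => X j) ∘ Nat.succ)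
      = fun j => (X j : Rr) := by
    funext j; rfl
  rw [h, aeval_X_left_apply]

variable (D : Derivation ℚ Rr Rr) (hD0 : D (X 0) = 0) (hD : ∀ k : ℕ, D (X (k + 1)) = X k)

include hD0 hD in
lemma Phi_D (P : Rr) : Phi (D P) = D (Phi P) := by
  have hgen : ∀ n : ℕ, Phi (D (X n)) = D (Phi (X n)) := by
    intro n
    match n with
    | 0 => rw [hD0, map_zero, Phi_X0, map_zero]
    | 1 => rw [hD 0, Phi_X0, Phi_X_succ 0, hD0]
    | (m+2) => rw [hD (m+1), Phi_X_succ m, Phi_X_succ (m+1), hD m]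
  induction P using MvPolynomial.induction_on with
  | C q =>
    have hC : Phi (C q) = C q := by rw [Phi, aeval_C]; rfl
    rw [derivation_C, map_zero, hC, derivation_C]
  | add p q ihp ihq => simp only [map_add, ihp, ihq]
  | mul_X p n ih =>
    simp only [Derivation.leibniz, smul_eq_mul, map_add, map_mul, ih, hgen]

include hD0 hD in
lemma Phi_D_iter (k : ℕ) (P : Rr) : Phi ((⇑D)^[k] P) = (⇑D)^[k] (Phi P) := by
  induction k with
  | zero => rfl
  | succ j ih =>
    rw [Function.iterate_succ_apply', Function.iterate_succ_apply',
      Phi_D D hD0 hD, ih]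

lemma Phi_monomial (m : ℕ →₀ ℕ) (c : ℚ) :
    Phi (monomial m c) =
      if m 0 = 0 then monomial (Finsupp.mapDomain Nat.pred m) c else 0 := by
  induction m using Finsupp.induction with
  | zero =>
    have hcond : ((0:ℕ→₀ℕ) 0 = 0) := rfl
    rw [MvPolynomial.monomial_zero', if_pos hcond,
      Finsupp.mapDomain_zero, MvPolynomial.monomial_zero', Phi, aeval_C]
    rfl
  | single_add a n f han hn ih =>
    rw [monomial_single_add, map_mul, map_pow, ih]
    have happ : (Finsupp.single a n + f) 0 = Finsupp.single a n 0 + f 0 := rfl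
    cases a with
    | zero =>
      rw [Phi_X0, zero_pow hn, zero_mul, if_neg]
      rw [happ, Finsupp.single_eq_same]
      omega
    | succ j =>
      have h0 : (Finsupp.single (j+1) n + f) 0 = f 0 := by
        rw [happ, Finsupp.single_eq_of_ne (by omega), zero_add]
      rw [Phi_X_succ j]
      by_cases hf : f 0 = 0
      · rw [if_pos hf, if_pos (by rw [h0]; exact hf)]
        rw [Finsupp.mapDomain_add, Finsupp.mapDomain_single]
        have hpred : Nat.pred (j+1) = j := rfl
        rw [hpred, monomial_single_add]
      · rw [if_neg hf, if_neg (by rw [h0]; exact hf), mul_zero]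

lemma degI_mapDomain (f : ℕ → ℕ) (m : ℕ →₀ ℕ) :
    degI (Finsupp.mapDomain f m) = degI m :=
  Finsupp.sum_mapDomain_index (fun _ => rfl) (fun _ _ _ => by push_cast; ring)

lemma wdegI_mapDomain (f : ℕ → ℕ) (m : ℕ →₀ ℕ) :
    wdegI (Finsupp.mapDomain f m) = m.sum fun k n => ((f k : ℤ) * n) :=
  Finsupp.sum_mapDomain_index (fun _ => by simp) (fun _ _ _ => by push_cast; ring)

lemma bihom_Phi {d e : ℤ} {P : Rr} (hP : Bihom d e P) : Bihom d (e - d) (Phi P) := by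
  have hsum : Phi P = ∑ m ∈ P.support, Phi (monomial m (coeff m P)) := by
    conv_lhs => rw [P.as_sum]
    exact map_sum Phi _ _
  rw [hsum]
  apply bihom_sum
  intro m hm
  have e1 : degI m = d := (hP m hm).1
  have e2 : wdegI m = e := (hP m hm).2
  rw [Phi_monomial]
  split
  · next h0 =>
    apply bihom_monomial
    · rw [degI_mapDomain, e1]
    · rw [wdegI_mapDomain]
      have hc : (m.sum fun k n => ((Nat.pred k : ℤ) * n))
          = ∑ k ∈ m.support, (((k:ℤ)) * m k - (m k : ℤ)) := by
        rw [Finsupp.sum]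
        apply Finset.sum_congr rfl
        intro a ha
        have ha0 : a ≠ 0 := by
          intro hz
          subst hz
          exact (Finsupp.mem_support_iff.mp ha) h0
        obtain ⟨a', rfl⟩ := Nat.exists_eq_succ_of_ne_zero ha0
        have : Nat.pred (a' + 1) = a' := rfl
        rw [this]
        push_cast
        ring
      rw [hc, Finset.sum_sub_distrib]
      have hw : wdegI m = ∑ k ∈ m.support, ((k:ℤ)) * m k := rfl
      have hd : degI m = ∑ k ∈ m.support, ((m k : ℤ)) := rfl
      rw [← hw, ← hd, e1, e2]
  · exact bihom_zero _ _

lemma bihom_Psi {d e : ℤ} {P : Rr} (hP : Bihom d e P) : Bihom d (e + d) (Psi P) := by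
  classical
  intro m hm
  rw [Psi] at hm
  rw [MvPolynomial.support_rename_of_injective Nat.succ_injective] at hm
  obtain ⟨m', hm', rfl⟩ := Finset.mem_image.mp hm
  have e1 : degI m' = d := (hP m' hm').1
  have e2 : wdegI m' = e := (hP m' hm').2
  constructor
  · show degI (Finsupp.mapDomain Nat.succ m') = d
    rw [degI_mapDomain, e1]
  · show wdegI (Finsupp.mapDomain Nat.succ m') = e + d
    rw [wdegI_mapDomain]
    have hc : (m'.sum fun k n => ((Nat.succ k : ℤ) * n))
        = ∑ k ∈ m'.support, (((k:ℤ)) * m' k + (m' k : ℤ)) := by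
      rw [Finsupp.sum]
      apply Finset.sum_congr rfl
      intro a _
      push_cast
      ring
    rw [hc, Finset.sum_add_distrib]
    have hw : wdegI m' = ∑ k ∈ m'.support, ((k:ℤ)) * m' k := rfl
    have hd : degI m' = ∑ k ∈ m'.support, ((m' k : ℤ)) := rfl
    rw [← hw, ← hd, e1, e2]

lemma psi_phi_decomp (P : Rr) : ∃ P₁ : Rr, P = Psi (Phi P) + X 0 * P₁ := by
  induction P using MvPolynomial.induction_on' with
  | monomial m c =>
    by_cases h0 : m 0 = 0
    · refine ⟨0, ?_⟩
      rw [Phi_monomial, if_pos h0, Psi, rename_monomial]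
      have hmm : Finsupp.mapDomain Nat.succ (Finsupp.mapDomain Nat.pred m) = m := by
        rw [← Finsupp.mapDomain_comp]
        rw [Finsupp.mapDomain_congr (g := id) ?_, Finsupp.mapDomain_id]
        intro x hx
        have hx0 : x ≠ 0 := by
          intro hz; subst hz; exact (Finsupp.mem_support_iff.mp hx) h0
        simp only [Function.comp_apply, id_eq]
        exact Nat.succ_pred_eq_of_pos (Nat.pos_of_ne_zero hx0)
      rw [hmm, mul_zero, add_zero]
    · refine ⟨monomial (m - Finsupp.single 0 1) c, ?_⟩
      rw [Phi_monomial, if_neg h0, map_zero, zero_add, X0_mul_monomial]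
      congr 1
      have hle : Finsupp.single 0 1 ≤ m := Finsupp.single_le_iff.mpr (by omega)
      rw [add_tsub_cancel_of_le hle]
  | add p q ihp ihq =>
    obtain ⟨p1, hp⟩ := ihp
    obtain ⟨q1, hq⟩ := ihq
    refine ⟨p1 + q1, ?_⟩
    rw [map_add, map_add, mul_add]
    conv_lhs => rw [hp, hq]
    ring

end PhiPsi

section Gamma

variable (D : Derivation ℚ Rr Rr)

/-- truncated version of `gammaMap` -/
noncomputable def gammaSum (M : ℕ) (Q : Rr) : Rr :=
  ∑ k ∈ Finset.range M, ((-1 : ℚ) ^ k) • (X k * (⇑D)^[k] Q)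

lemma gamma_eq {M : ℕ} {Q : Rr} (hb : ∀ k, M ≤ k → (⇑D)^[k] Q = 0) :
    gammaMap D Q = gammaSum D M Q := by
  rw [gammaMap, gammaSum]
  refine finsum_eq_sum_of_support_subset _ (Function.support_subset_iff'.mpr ?_)
  intro k hk
  have hMk : M ≤ k := by
    simp only [Finset.coe_range, Set.mem_Iio, not_lt] at hk
    exact hk
  rw [hb k hMk, mul_zero, smul_zero]

lemma gamma_zero : gammaMap D 0 = 0 := by
  rw [gamma_eq D (M := 0) (fun k _ => D_iter_zero D k)]
  rfl

variable (hD0 : D (X 0) = 0) (hD : ∀ k : ℕ, D (X (k + 1)) = X k)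

include hD0 hD in
lemma bound_of_bihom {d e : ℤ} {Q : Rr} (hQ : Bihom d e Q) :
    ∀ k, e.toNat + 1 ≤ k → (⇑D)^[k] Q = 0 := by
  intro k hk
  have := Int.self_le_toNat e
  exact D_iter_eq_zero D hD0 hD hQ (by omega)

include hD0 hD in
lemma gamma_eq_of_bihom {d e : ℤ} {Q : Rr} (hQ : Bihom d e Q) :
    gammaMap D Q = gammaSum D (e.toNat + 1) Q :=
  gamma_eq D (bound_of_bihom D hD0 hD hQ)

include hD0 hD in
lemma bihom_gamma {a b : ℤ} {Q : Rr} (hQ : Bihom a b Q) :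
    Bihom (a + 1) b (gammaMap D Q) := by
  rw [gamma_eq_of_bihom D hD0 hD hQ, gammaSum]
  apply bihom_sum
  intro k _
  apply bihom_smul
  exact bihom_congr (bihom_mul (bihom_X k) (bihom_D_iter D hD0 hD hQ k))
    (by ring) (by ring)

include hD0 hD in
lemma D_gamma {a b : ℤ} {Q : Rr} (hQ : Bihom a b Q) : D (gammaMap D Q) = 0 := by
  set M₀ := b.toNat + 1 with hM
  have hbound : ∀ k, M₀ + 1 ≤ k → (⇑D)^[k] Q = 0 := fun k hk => by
    have := Int.self_le_toNat b
    exact D_iter_eq_zero D hD0 hD hQ (by omega)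
  rw [gamma_eq D hbound, gammaSum]
  have hDsum : D (∑ k ∈ Finset.range (M₀+1), ((-1:ℚ)^k) • (X k * (⇑D)^[k] Q))
      = ∑ k ∈ Finset.range (M₀+1), D (((-1:ℚ)^k) • (X k * (⇑D)^[k] Q)) :=
    map_sum D.toLinearMap _ _
  rw [hDsum]
  have hterm : ∀ k, D (((-1:ℚ)^k) • (X k * (⇑D)^[k] Q))
      = ((-1:ℚ)^k) • (X k * (⇑D)^[k+1] Q) + ((-1:ℚ)^k) • (D (X k) * (⇑D)^[k] Q) := by
    intro k
    rw [Derivation.map_smul, Derivation.leibniz, smul_eq_mul, smul_eq_mul, smul_add,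
      Function.iterate_succ_apply' (⇑D) k Q]
    rw [mul_comm ((⇑D)^[k] Q) (D (X k))]
  rw [Finset.sum_congr rfl (fun k _ => hterm k), Finset.sum_add_distrib]
  have h1 : ∑ k ∈ Finset.range (M₀+1), ((-1:ℚ)^k) • (X k * (⇑D)^[k+1] Q)
      = ∑ k ∈ Finset.range M₀, ((-1:ℚ)^k) • (X k * (⇑D)^[k+1] Q) := by
    rw [Finset.sum_range_succ, hbound (M₀+1) (le_refl _), mul_zero, smul_zero,
      add_zero]
  have h2 : ∑ k ∈ Finset.range (M₀+1), ((-1:ℚ)^k) • (D (X k) * (⇑D)^[k] Q)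
      = - ∑ k ∈ Finset.range M₀, ((-1:ℚ)^k) • (X k * (⇑D)^[k+1] Q) := by
    rw [Finset.sum_range_succ']
    have hf0 : ((-1:ℚ)^0) • (D (X 0) * (⇑D)^[0] Q) = 0 := by
      rw [hD0, zero_mul, smul_zero]
    have hfj : ∀ j, ((-1:ℚ)^(j+1)) • (D (X (j+1)) * (⇑D)^[j+1] Q)
        = - (((-1:ℚ)^j) • (X j * (⇑D)^[j+1] Q)) := by
      intro j
      rw [hD j, pow_succ, mul_comm ((-1:ℚ)^j) (-1), neg_one_mul, neg_smul]
    rw [Finset.sum_congr rfl (fun j _ => hfj j), hf0, add_zero,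
      Finset.sum_neg_distrib]
  rw [h1, h2]
  abel

lemma gamma_of_ker {Q : Rr} (h : D Q = 0) : gammaMap D Q = X 0 * Q := by
  have hb : ∀ k, 1 ≤ k → (⇑D)^[k] Q = 0 := by
    intro k hk
    obtain ⟨j, rfl⟩ : ∃ j, k = j + 1 := ⟨k-1, by omega⟩
    rw [Function.iterate_succ_apply, h, D_iter_zero]
  rw [gamma_eq D hb, gammaSum]
  rw [Finset.sum_range_one]
  rw [pow_zero, one_smul]
  rfl

include hD0 hD in
lemma gamma_add_of_bihom {a b a' b' : ℤ} {Q Q' : Rr} (hQ : Bihom a b Q)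
    (hQ' : Bihom a' b' Q') :
    gammaMap D (Q + Q') = gammaMap D Q + gammaMap D Q' := by
  set M := max b.toNat b'.toNat + 1 with hM
  have h1 : ∀ k, M ≤ k → (⇑D)^[k] Q = 0 := fun k hk => by
    have := Int.self_le_toNat b
    exact D_iter_eq_zero D hD0 hD hQ (by omega)
  have h2 : ∀ k, M ≤ k → (⇑D)^[k] Q' = 0 := fun k hk => by
    have := Int.self_le_toNat b'
    exact D_iter_eq_zero D hD0 hD hQ' (by omega)
  have h12 : ∀ k, M ≤ k → (⇑D)^[k] (Q + Q') = 0 := fun k hk => by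
    rw [D_iter_add, h1 k hk, h2 k hk, add_zero]
  rw [gamma_eq D h12, gamma_eq D h1, gamma_eq D h2, gammaSum, gammaSum, gammaSum,
    ← Finset.sum_add_distrib]
  apply Finset.sum_congr rfl
  intro k _
  rw [D_iter_add, mul_add, smul_add]

include hD0 hD in
lemma Phi_gamma {a b : ℤ} {Q : Rr} (hQ : Bihom a b Q) :
    Phi (gammaMap D Q) = - gammaMap D (Phi (D Q)) := by
  set M₀ := b.toNat + 1 with hM
  have hbQ : ∀ k, M₀ + 1 ≤ k → (⇑D)^[k] Q = 0 := fun k hk => by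
    have := Int.self_le_toNat b
    exact D_iter_eq_zero D hD0 hD hQ (by omega)
  have hbP : ∀ k, M₀ ≤ k → (⇑D)^[k] (Phi (D Q)) = 0 := by
    intro k hk
    rw [← Phi_D_iter D hD0 hD k (D Q), ← Function.iterate_succ_apply (⇑D) k Q,
      hbQ (k+1) (by omega), map_zero]
  rw [gamma_eq D hbQ, gamma_eq D hbP, gammaSum, gammaSum]
  rw [map_sum]
  rw [Finset.sum_range_succ']
  have hf0 : Phi (((-1:ℚ)^0) • (X 0 * (⇑D)^[0] Q)) = 0 := by
    rw [pow_zero, one_smul, map_mul, Phi_X0, zero_mul]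
  have hfj : ∀ j, Phi (((-1:ℚ)^(j+1)) • (X (j+1) * (⇑D)^[j+1] Q))
      = - (((-1:ℚ)^j) • (X j * (⇑D)^[j] (Phi (D Q)))) := by
    intro j
    rw [map_smul, map_mul, Phi_X_succ]
    have h1 : Phi ((⇑D)^[j+1] Q) = (⇑D)^[j] (Phi (D Q)) := by
      rw [Function.iterate_succ_apply, Phi_D_iter D hD0 hD]
    rw [h1, pow_succ, mul_comm ((-1:ℚ)^j) (-1), neg_one_mul, neg_smul]
  rw [Finset.sum_congr rfl (fun j _ => hfj j), hf0, add_zero,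
    Finset.sum_neg_distrib]

end Gamma

section Main

variable (D : Derivation ℚ Rr Rr) (hD0 : D (X 0) = 0) (hD : ∀ k : ℕ, D (X (k + 1)) = X k)

include hD0 hD in
lemma gamma_neg_of_bihom {a b : ℤ} {Q : Rr} (hQ : Bihom a b Q) :
    gammaMap D (-Q) = - gammaMap D Q := by
  have h := gamma_add_of_bihom D hD0 hD hQ (bihom_neg hQ)
  rw [add_neg_cancel, gamma_zero] at h
  exact eq_neg_of_add_eq_zero_right h.symm

lemma single_of_degI_one {m : ℕ →₀ ℕ} (h : degI m = 1) : ∃ a, m = Finsupp.single a 1 := by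
  have hne : m ≠ 0 := by
    rintro rfl
    rw [degI_zero] at h
    omega
  have hnonempty : m.support.Nonempty := by
    rw [Finsupp.support_nonempty_iff]
    exact hne
  have hcard : m.support.card ≤ 1 := by
    by_contra hc
    push_neg at hc
    have hineq : (m.support.card : ℤ) ≤ ∑ k ∈ m.support, ((m k : ℤ)) := by
      calc (m.support.card : ℤ) = ∑ _k ∈ m.support, (1:ℤ) := by
            rw [Finset.sum_const, nsmul_eq_mul, mul_one]
        _ ≤ _ := Finset.sum_le_sum (fun i hi => by
            have := Finsupp.mem_support_iff.mp hi
            omega)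
    have hd : degI m = ∑ k ∈ m.support, ((m k:ℤ)) := rfl
    omega
  obtain ⟨b, hb⟩ := Finset.card_eq_one.mp
    (le_antisymm hcard (Finset.card_pos.mpr hnonempty))
  have hmb : m = Finsupp.single b (m b) := (Finsupp.support_eq_singleton.mp hb).2
  refine ⟨b, ?_⟩
  rw [hmb, degI_single] at h
  have hb1 : m b = 1 := by exact_mod_cast h
  rw [hmb, hb1]

include hD0 hD in
lemma Ld1 {e : ℤ} {K : Rr} (hK : Bihom 1 e K) (he : 1 ≤ e) (hker : D K = 0) : K = 0 := by
  classical
  have hsub : K.support ⊆ {Finsupp.single e.toNat 1} := by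
    intro m hm
    have e1 : degI m = 1 := (hK m hm).1
    have e2 : wdegI m = e := (hK m hm).2
    obtain ⟨a, rfl⟩ := single_of_degI_one e1
    rw [wdegI_single] at e2
    simp only [Finset.mem_singleton]
    have ha : a = e.toNat := by omega
    rw [ha]
  have hKm : K = monomial (Finsupp.single e.toNat 1)
      (coeff (Finsupp.single e.toNat 1) K) := eq_monomial_of_support_subset hsub
  set c := coeff (Finsupp.single e.toNat 1) K with hc
  obtain ⟨j, hj⟩ : ∃ j, e.toNat = j + 1 := ⟨e.toNat - 1, by omega⟩
  have hXc : K = C c * X e.toNat := by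
    rw [hKm, MvPolynomial.monomial_eq, Finsupp.prod_single_index (by rw [pow_zero]),
      pow_one]
  have hDK : D K = C c * X j := by
    rw [hXc, hj, Derivation.leibniz, smul_eq_mul, smul_eq_mul, derivation_C,
      mul_zero, add_zero, hD j]
  rw [hDK] at hker
  rcases mul_eq_zero.mp hker with h | h
  · rw [hXc, h, zero_mul]
  · exact absurd h (MvPolynomial.X_ne_zero j)

include hD0 hD in
lemma main (n : ℕ) : ∀ d e : ℤ, ∀ K : Rr, Bihom d e K → D K = 0 → (d, e) ≠ (0, 0) →
    e ≤ n → ∃ Q, Bihom (d - 1) e Q ∧ gammaMap D Q = K := by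
  induction n using Nat.strong_induction_on with
  | _ n IH =>
  intro d e K hK hker hde hen
  by_cases hK0 : K = 0
  · exact ⟨0, bihom_zero _ _, by rw [hK0, gamma_zero]⟩
  obtain ⟨m, hm⟩ : K.support.Nonempty := by
    rw [Finset.nonempty_iff_ne_empty]
    intro hemp
    exact hK0 (MvPolynomial.support_eq_empty.mp hemp)
  have e1m : degI m = d := (hK m hm).1
  have e2m : wdegI m = e := (hK m hm).2
  have hd0 : 0 ≤ d := by have := degI_nonneg m; omega
  have he0 : 0 ≤ e := by have := wdegI_nonneg m; omega
  by_cases hd : d = 0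
  · exfalso
    rcases eq_or_ne e 0 with he | he
    · exact hde (by rw [hd, he])
    · exact hK0 (bihom_d0 (hd ▸ hK) he)
  have hd1 : 1 ≤ d := by omega
  rcases eq_or_ne e 0 with he | he
  · subst he
    have hsub : K.support ⊆ {Finsupp.single 0 d.toNat} := by
      intro m' hm'
      have e1 : degI m' = d := (hK m' hm').1
      have e2 : wdegI m' = 0 := (hK m' hm').2
      have hval : ∀ k, k ≠ 0 → m' k = 0 := by
        intro k hk
        by_contra hmk
        have hks : k ∈ m'.support := Finsupp.mem_support_iff.mpr hmk
        set g : ℕ → ℤ := fun j => (j:ℤ) * m' j with hg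
        have hle : g k ≤ ∑ j ∈ m'.support, g j :=
          Finset.single_le_sum
            (fun (i:ℕ) _ => show (0:ℤ) ≤ (i:ℤ) * m' i by positivity) hks
        have hw : wdegI m' = ∑ j ∈ m'.support, g j := rfl
        have hpos : (0:ℤ) < g k := by
          show (0:ℤ) < (k:ℤ) * m' k
          have h1 : (0:ℤ) < (k:ℤ) := by exact_mod_cast Nat.pos_of_ne_zero hk
          have h2 : (0:ℤ) < (m' k:ℤ) := by exact_mod_cast Nat.pos_of_ne_zero hmk
          exact mul_pos h1 h2
        have hgk : g k = (k:ℤ) * m' k := rfl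
        omega
      have hm0 : m' = Finsupp.single 0 (m' 0) := by
        ext k
        rcases eq_or_ne k 0 with rfl | hk
        · rw [Finsupp.single_eq_same]
        · rw [Finsupp.single_eq_of_ne' (Ne.symm hk)]
          exact hval k hk
      have e3 : degI (Finsupp.single 0 (m' 0)) = d := by rw [← hm0]; exact e1
      rw [degI_single] at e3
      simp only [Finset.mem_singleton]
      rw [hm0]
      congr 1
      omega
    have hKm : K = monomial (Finsupp.single 0 d.toNat)
        (coeff (Finsupp.single 0 d.toNat) K) := eq_monomial_of_support_subset hsub
    set c := coeff (Finsupp.single 0 d.toNat) K with hc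
    have hbQ : Bihom (d-1) 0 (monomial (Finsupp.single 0 (d.toNat - 1)) c) :=
      bihom_monomial _ _ (by rw [degI_single]; omega)
        (by rw [wdegI_single]; push_cast; ring)
    refine ⟨monomial (Finsupp.single 0 (d.toNat - 1)) c, hbQ, ?_⟩
    have hDQ : D (monomial (Finsupp.single 0 (d.toNat - 1)) c) = 0 :=
      bihom_zero_of_neg (bihom_D D hD0 hD hbQ) (Or.inr (by omega))
    rw [gamma_of_ker D hDQ, X0_mul_monomial]
    conv_rhs => rw [hKm]
    rw [← Finsupp.single_add]
    have hone : 1 + (d.toNat - 1) = d.toNat := by omega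
    rw [hone]
  have he1 : 1 ≤ e := by omega
  rcases eq_or_ne d 1 with hd1' | hdne
  · exact absurd (Ld1 D hD0 hD (hd1' ▸ hK) he1 hker) hK0
  have hd2 : 2 ≤ d := by omega
  have hn1 : 1 ≤ n := by omega
  have hbK' : Bihom d (e - d) (Phi K) := bihom_Phi hK
  have hkerK' : D (Phi K) = 0 := by rw [← Phi_D D hD0 hD, hker, map_zero]
  obtain ⟨Q₁, hbQ₁, hγQ₁⟩ := IH (n-1) (by omega) d (e - d) (Phi K) hbK' hkerK'
    (by simp only [ne_eq, Prod.mk.injEq, not_and]; intro h; omega)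
    (by push_cast [Nat.cast_sub hn1]; omega)
  obtain ⟨Q₂, hbQ₂, hDQ₂⟩ := surjD D hD0 hD (by omega : (1:ℤ) ≤ d - 1) hbQ₁
  set Q₃ : Rr := - Psi Q₂ with hQ₃
  have hbQ₃ : Bihom (d-1) e Q₃ := by
    apply bihom_neg
    exact bihom_congr (bihom_Psi hbQ₂) rfl (by ring)
  have hPhiQ₃ : Phi Q₃ = - Q₂ := by rw [hQ₃, map_neg, Phi_Psi]
  have hPhiγ : Phi (gammaMap D Q₃) = Phi K := by
    rw [Phi_gamma D hD0 hD hbQ₃, Phi_D D hD0 hD Q₃, hPhiQ₃, map_neg, hDQ₂,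
      gamma_neg_of_bihom D hD0 hD hbQ₁, neg_neg, hγQ₁]
  obtain ⟨K₁, hK₁⟩ := psi_phi_decomp (K - gammaMap D Q₃)
  have hbγQ₃ : Bihom d e (gammaMap D Q₃) :=
    bihom_congr (bihom_gamma D hD0 hD hbQ₃) (by ring) rfl
  have hPhidiff : Phi (K - gammaMap D Q₃) = 0 := by
    rw [map_sub, hPhiγ, sub_self]
  rw [hPhidiff, map_zero, zero_add] at hK₁
  have hDK₁ : D K₁ = 0 := by
    have h1 : D (K - gammaMap D Q₃) = 0 := by
      rw [map_sub, hker, D_gamma D hD0 hD hbQ₃, sub_zero]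
    rw [hK₁, Derivation.leibniz, smul_eq_mul, smul_eq_mul, hD0, mul_zero,
      add_zero] at h1
    rcases mul_eq_zero.mp h1 with h | h
    · exact absurd h (MvPolynomial.X_ne_zero 0)
    · exact h
  have hbXK₁ : Bihom d e (X 0 * K₁) := by
    rw [← hK₁]
    exact bihom_sub hK hbγQ₃
  have hbK₁ : Bihom (d-1) e K₁ := bihom_of_X0_mul hbXK₁
  refine ⟨Q₃ + K₁, bihom_add hbQ₃ hbK₁, ?_⟩
  rw [gamma_add_of_bihom D hD0 hD hbQ₃ hbK₁, gamma_of_ker D hDK₁, ← hK₁]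
  ring

end Main

end BigradedAux

open BigradedAux in
/-- For every bidegree `(d,e) ≠ (0,0)` the sequence
`R^{d-1,e} →γ R^{d,e} →∂ R^{d,e-1} →ε ℚ[0]^{d,e-1} → 0` is exact, where `ℚ[0]^{d,e-1}`
is `ℚ` if `(d, e-1) = (0,0)` and `0` otherwise. -/
theorem bigraded_sequence_exact
    (D : Derivation ℚ (MvPolynomial ℕ ℚ) (MvPolynomial ℕ ℚ))
    (hD0 : D (X 0) = 0) (hD : ∀ k : ℕ, D (X (k + 1)) = X k)
    (d e : ℤ) (hde : (d, e) ≠ (0, 0)) :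
    -- `γ` maps `R^{d-1,e}` into `R^{d,e}` and its image lies in `ker ∂`
    (∀ Q, Bihom (d - 1) e Q → Bihom d e (gammaMap D Q) ∧ D (gammaMap D Q) = 0) ∧
    -- exactness at `R^{d,e}`: `ker ∂ ⊆ im γ`
    (∀ P, Bihom d e P → D P = 0 → ∃ Q, Bihom (d - 1) e Q ∧ gammaMap D Q = P) ∧
    -- `∂` maps `R^{d,e}` into `R^{d,e-1}` and its image lies in `ker ε`
    (∀ P, Bihom d e P →
      Bihom d (e - 1) (D P) ∧ ((d, e - 1) = (0, 0) → constantCoeff (D P) = 0)) ∧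
    -- exactness at `R^{d,e-1}`: `ker ε ⊆ im ∂`
    (∀ P, Bihom d (e - 1) P → ((d, e - 1) = (0, 0) → constantCoeff P = 0) →
      ∃ Q, Bihom d e Q ∧ D Q = P) ∧
    -- exactness at `ℚ[0]^{d,e-1}`: `ε` is surjective onto it
    ((d, e - 1) = (0, 0) → ∀ q : ℚ, ∃ P, Bihom d (e - 1) P ∧ constantCoeff P = q) := by
  refine ⟨?_, ?_, ?_, ?_, ?_⟩
  · intro Q hQ
    exact ⟨bihom_congr (bihom_gamma D hD0 hD hQ) (by ring) rfl, D_gamma D hD0 hD hQ⟩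
  · intro P hP hker
    exact main D hD0 hD e.toNat d e P hP hker hde (Int.self_le_toNat e)
  · intro P hP
    refine ⟨bihom_D D hD0 hD hP, ?_⟩
    intro h01
    rw [Prod.mk.injEq] at h01
    have hP0 : P = 0 := bihom_d0 (h01.1 ▸ hP) (by omega)
    rw [hP0, map_zero, map_zero]
  · intro P hP hc
    by_cases hP0 : P = 0
    · exact ⟨0, bihom_zero _ _, by rw [hP0, map_zero]⟩
    obtain ⟨m, hm⟩ : P.support.Nonempty := by
      rw [Finset.nonempty_iff_ne_empty]
      intro hemp
      exact hP0 (MvPolynomial.support_eq_empty.mp hemp)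
    have e1 : degI m = d := (hP m hm).1
    have hd0 : 0 ≤ d := by have := degI_nonneg m; omega
    by_cases hd : d = 0
    · exfalso
      rcases eq_or_ne (e-1) 0 with he | he
      · have h00 : (d, e-1) = ((0:ℤ), (0:ℤ)) := by rw [hd, he]
        have hcc := hc h00
        have hsub : P.support ⊆ {0} := by
          intro m' hm'
          simp only [Finset.mem_singleton]
          exact finsupp_eq_zero_of_degI (hd ▸ (hP m' hm').1)
        have hPm : P = monomial 0 (coeff 0 P) := eq_monomial_of_support_subset hsub
        rw [MvPolynomial.constantCoeff_eq] at hcc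
        rw [hcc, map_zero] at hPm
        exact hP0 hPm
      · exact hP0 (bihom_d0 (hd ▸ hP) he)
    · obtain ⟨Q, hbQ, hDQ⟩ := surjD D hD0 hD (by omega : (1:ℤ) ≤ d) hP
      exact ⟨Q, bihom_congr hbQ rfl (by ring), hDQ⟩
  · intro h01 q
    rw [Prod.mk.injEq] at h01
    refine ⟨C q, ?_, MvPolynomial.constantCoeff_C ℕ q⟩
    exact bihom_congr (bihom_C q) h01.1.symm h01.2.symm
end

section
/- Let H = ℚ[z₁, z₂, …] and fix a nonzero rational number r. Let ∂ be the derivation on H with ∂(z_j) = z_{j-1} for j > 1 and ∂(z₁) = r. Then ∂: H → H is surjective. -/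
open MvPolynomial

section Aux
variable (D : Derivation ℚ (MvPolynomial ℕ ℚ) (MvPolynomial ℕ ℚ))

local notation "L" => D.toLinearMap

lemma aux_pow_succ (n : ℕ) (p : MvPolynomial ℕ ℚ) :
    (L ^ (n + 1)) p = (L ^ n) (D p) := by
  rw [pow_succ, Module.End.mul_apply]; rfl

lemma aux_mono {m k : ℕ} {p : MvPolynomial ℕ ℚ} (hp : (L ^ m) p = 0) (h : m ≤ k) :
    (L ^ k) p = 0 := by
  obtain ⟨d, rfl⟩ := Nat.exists_eq_add_of_le h
  rw [add_comm, pow_add, Module.End.mul_apply, hp, map_zero]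

lemma aux_nilmul : ∀ N m n (p q : MvPolynomial ℕ ℚ), m + n = N →
    (L ^ m) p = 0 → (L ^ n) q = 0 → (L ^ N) (p * q) = 0 := by
  intro N
  induction N using Nat.strong_induction_on with
  | _ N ih =>
    intro m n p q hmn hp hq
    match m, n with
    | 0, n =>
      simp only [pow_zero, Module.End.one_apply] at hp
      subst hp; simp
    | m+1, 0 =>
      simp only [pow_zero, Module.End.one_apply] at hq
      subst hq; simp
    | a+1, b+1 =>
      subst hmn
      have h1 : (L ^ (a+1+(b+1))) (p * q) = (L ^ (a+(b+1))) (D (p * q)) := by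
        rw [show a+1+(b+1) = (a+(b+1))+1 by ring, aux_pow_succ]
      rw [h1, D.leibniz, smul_eq_mul, smul_eq_mul, map_add]
      have e1 : (L ^ (a+(b+1))) (p * D q) = 0 := by
        refine ih _ (by omega) (a+1) b p (D q) (by ring) hp ?_
        rw [← aux_pow_succ]; exact hq
      have e2 : (L ^ (a+(b+1))) (q * D p) = 0 := by
        refine ih _ (by omega) (b+1) a q (D p) (by ring) hq ?_
        rw [← aux_pow_succ]; exact hp
      rw [e1, e2, add_zero]

lemma aux_DC (a : ℚ) : D (C a) = 0 := by
  have : (C a : MvPolynomial ℕ ℚ) = algebraMap ℚ _ a := rfl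
  rw [this, Derivation.map_algebraMap]

lemma aux_nilX (r : ℚ) (hD1 : D (X 0) = C r) (hD : ∀ j : ℕ, D (X (j + 1)) = X j) :
    ∀ j : ℕ, (L ^ (j + 2)) (X j : MvPolynomial ℕ ℚ) = 0 := by
  intro j
  induction j with
  | zero =>
    rw [aux_pow_succ, hD1, aux_pow_succ, aux_DC, map_zero]
  | succ k ihk =>
    rw [aux_pow_succ, hD k]
    exact aux_mono D ihk (by omega)

lemma aux_nil (r : ℚ) (hD1 : D (X 0) = C r) (hD : ∀ j : ℕ, D (X (j + 1)) = X j)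
    (p : MvPolynomial ℕ ℚ) : ∃ n, (L ^ n) p = 0 := by
  induction p using MvPolynomial.induction_on with
  | C a => exact ⟨1, by rw [pow_one]; exact aux_DC D a⟩
  | add p q hp hq =>
    obtain ⟨m, hm⟩ := hp; obtain ⟨n, hn⟩ := hq
    exact ⟨max m n, by rw [map_add, aux_mono D hm (le_max_left _ _),
      aux_mono D hn (le_max_right _ _), add_zero]⟩
  | mul_X p i hp =>
    obtain ⟨m, hm⟩ := hp
    exact ⟨m + (i + 2), aux_nilmul D _ m (i+2) p (X i) rfl hm (aux_nilX D r hD1 hD i)⟩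

lemma aux_key (s : MvPolynomial ℕ ℚ) (hs : D s = 1) :
    ∀ n p, (L ^ n) p = 0 → ∀ k : ℕ, ∃ q, D q = s ^ k * p := by
  intro n
  induction n with
  | zero =>
    intro p hp k
    simp only [pow_zero, Module.End.one_apply] at hp
    exact ⟨0, by simp [hp]⟩
  | succ n ih =>
    intro p hp k
    have hDp : (L ^ n) (D p) = 0 := by rw [← aux_pow_succ]; exact hp
    obtain ⟨q, hq⟩ := ih (D p) hDp (k + 1)
    refine ⟨((k+1 : ℚ))⁻¹ • (s ^ (k+1) * p - q), ?_⟩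
    have hk : ((k : ℚ) + 1) ≠ 0 := by positivity
    rw [D.map_smul, map_sub, hq, D.leibniz, D.leibniz_pow, hs]
    simp only [smul_eq_mul, Nat.add_sub_cancel, mul_one, add_sub_cancel_left, nsmul_eq_mul,
      smul_eq_C_mul]
    push_cast
    have h2 : ((k : MvPolynomial ℕ ℚ) + 1) = C ((k : ℚ) + 1) := by simp
    rw [h2, ← mul_assoc, mul_comm (C ((k:ℚ)+1)⁻¹) p, mul_assoc, ← mul_assoc (C ((k:ℚ)+1)⁻¹),
      ← C_mul, inv_mul_cancel₀ hk, C_1, one_mul, mul_comm]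

end Aux

/-- Let `H = ℚ[z₁, z₂, …]` (variable `X j` stands for `z_{j+1}`), `r ≠ 0` a rational,
and `∂` the derivation with `∂(z_j) = z_{j-1}` for `j > 1` and `∂(z₁) = r`.
Then `∂` is surjective. -/
theorem deriv_surjective_of_rank_ne_zero (r : ℚ) (hr : r ≠ 0)
    (D : Derivation ℚ (MvPolynomial ℕ ℚ) (MvPolynomial ℕ ℚ))
    (hD1 : D (X 0) = C r) (hD : ∀ j : ℕ, D (X (j + 1)) = X j) :
    Function.Surjective ⇑D := by
  intro p
  obtain ⟨n, hn⟩ := aux_nil D r hD1 hD p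
  have hs : D (C r⁻¹ * X 0) = 1 := by
    rw [D.leibniz, aux_DC, smul_zero, add_zero, hD1, smul_eq_mul, ← C_mul,
      mul_comm, mul_inv_cancel₀ hr, C_1]
  obtain ⟨q, hq⟩ := aux_key D _ hs n p hn 0
  exact ⟨q, by rw [hq, pow_zero, one_mul]⟩
end

section
/- Let H = ℚ[z₁, z₂, …] with derivation ∂ given by ∂(z_j) = z_{j-1} for j > 1 and ∂(z₁) = 0 (the case r = 0). Then the image of ∂ equals the kernel of the constant-term homomorphism ε: H → ℚ, i.e., ∂ is surjective onto polynomials with zero constant term, and ε ∘ ∂ = 0. -/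
open MvPolynomial

/-- weight of an exponent vector: `X i` has weight `i+1`. -/
private def wt (d : ℕ →₀ ℕ) : ℕ := d.sum fun i k => (i + 1) * k

private lemma wt_add (a b : ℕ →₀ ℕ) : wt (a + b) = wt a + wt b :=
  Finsupp.sum_add_index' (fun _ => by simp) (fun i b₁ b₂ => by ring)

private lemma wt_single (i k : ℕ) : wt (Finsupp.single i k) = (i + 1) * k :=
  Finsupp.sum_single_index (by simp)

private lemma wt_eq_zero {d : ℕ →₀ ℕ} (h : wt d = 0) : d = 0 := by
  by_contra hd
  obtain ⟨i, hi⟩ := Finsupp.support_nonempty_iff.mpr hd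
  have hwt : wt d = ∑ x ∈ d.support, (x + 1) * d x := rfl
  have h1 : (i + 1) * d i ≤ ∑ x ∈ d.support, (x + 1) * d x :=
    Finset.single_le_sum (f := fun x => (x + 1) * d x) (fun _ _ => Nat.zero_le _) hi
  have h2 : d i ≠ 0 := Finsupp.mem_support_iff.mp hi
  have : 0 < (i + 1) * d i := Nat.mul_pos (Nat.succ_pos i) (Nat.pos_of_ne_zero h2)
  omega

private lemma sub_single_add {d : ℕ →₀ ℕ} {j : ℕ} (h : d j ≠ 0) :
    (d - Finsupp.single j 1) + Finsupp.single j 1 = d := by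
  ext a
  rcases eq_or_ne a j with rfl | hne
  · simp; omega
  · have : j ≠ a := fun hja => hne hja.symm
    simp [Finsupp.single_apply, this]

private lemma hXmono (k : ℕ) :
    (X k : MvPolynomial ℕ ℚ) = monomial (Finsupp.single k 1) 1 := rfl

private lemma key (D : Derivation ℚ (MvPolynomial ℕ ℚ) (MvPolynomial ℕ ℚ))
    (hD1 : D (X 0) = 0) (hD : ∀ j : ℕ, D (X (j + 1)) = X j) :
    ∀ (n : ℕ) (d : ℕ →₀ ℕ) (hd : d.support.Nonempty),
      wt d ≤ d.support.max' hd + 1 + n →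
      (monomial d 1 : MvPolynomial ℕ ℚ) ∈ LinearMap.range D.toLinearMap := by
  have hDmk : ∀ s : ℕ →₀ ℕ, D (monomial s 1) =
      s.sum fun i k => monomial (s - Finsupp.single i 1) (k : ℚ) • D (X i) := by
    intro s
    have : D = mkDerivation ℚ (fun i => D (X i)) :=
      derivation_ext fun i => (mkDerivation_X ℚ (fun i => D (X i)) i).symm
    rw [this, mkDerivation_monomial]
    simp
  intro n
  induction n with
  | zero =>
    intro d hd hwt
    set j := d.support.max' hd with hj
    have hjs : j ∈ d.support := d.support.max'_mem hd
    have hdj : d j ≠ 0 := Finsupp.mem_support_iff.mp hjs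
    have hsplit := sub_single_add hdj
    have hwt' : wt (d - Finsupp.single j 1) + (j + 1) * 1 = wt d := by
      rw [← wt_single j 1, ← wt_add, hsplit]
    have h0 : wt (d - Finsupp.single j 1) = 0 := by omega
    have hds : d = Finsupp.single j 1 := by
      have h00 := wt_eq_zero h0
      rw [← hsplit, h00, zero_add]
    refine ⟨X (j + 1), ?_⟩
    show D (X (j + 1)) = _
    rw [hD j, hds, hXmono]
  | succ n ih =>
    intro d hd hwt
    set j := d.support.max' hd with hj
    have hjs : j ∈ d.support := d.support.max'_mem hd
    have hdj : d j ≠ 0 := Finsupp.mem_support_iff.mp hjs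
    set d' := d - Finsupp.single j 1 with hd'
    have hsplit : d' + Finsupp.single j 1 = d := sub_single_add hdj
    have hwtd : wt d' + (j + 1) * 1 = wt d := by
      rw [← wt_single j 1, ← wt_add, hsplit]
    -- monomial d 1 = D (X (j+1) * monomial d' 1) - X (j+1) * D (monomial d' 1)
    have hleib : D (X (j + 1) * monomial d' 1)
        = X (j + 1) * D (monomial d' 1) + monomial d 1 := by
      rw [Derivation.leibniz]
      rw [smul_eq_mul, smul_eq_mul, hD j]
      congr 1
      rw [hXmono, monomial_mul, one_mul, hsplit]
    have hmem2 : X (j + 1) * D (monomial d' 1) ∈ LinearMap.range D.toLinearMap := by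
      rw [hDmk d', Finsupp.sum, Finset.mul_sum]
      refine Submodule.sum_mem _ fun i hi => ?_
      rcases i with _ | m
      · rw [hD1]; simp
      · rw [hD m, smul_eq_mul, hXmono m, hXmono (j + 1),
          monomial_mul, monomial_mul, mul_one, one_mul]
        set e := Finsupp.single (j + 1) 1 + (d' - Finsupp.single (m + 1) 1 + Finsupp.single m 1)
          with he
        have hej : e (j + 1) ≠ 0 := by
          simp [he, Finsupp.add_apply, Finsupp.single_apply]
        have hes : (j + 1) ∈ e.support := Finsupp.mem_support_iff.mpr hej
        have hene : e.support.Nonempty := ⟨_, hes⟩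
        have hdi : d' (m + 1) ≠ 0 := Finsupp.mem_support_iff.mp hi
        have hwt1 : wt (d' - Finsupp.single (m + 1) 1) + (m + 1 + 1) * 1 = wt d' := by
          rw [← wt_single (m + 1) 1, ← wt_add, sub_single_add hdi]
        have hwte : wt e = wt d := by
          rw [he, wt_add, wt_add, wt_single, wt_single]
          omega
        have hmax : j + 1 ≤ e.support.max' hene := Finset.le_max' _ _ hes
        have hbound : wt e ≤ e.support.max' hene + 1 + n := by omega
        have hm := ih e hene hbound
        rw [show ((d' (m + 1) : ℚ)) = ((d' (m + 1) : ℚ) • (1 : ℚ)) from by simp,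
          ← smul_monomial]
        exact Submodule.smul_mem _ _ hm
    have hsub := Submodule.sub_mem _ (LinearMap.mem_range_self D.toLinearMap
      (X (j + 1) * monomial d' 1)) hmem2
    have heq : D (X (j + 1) * monomial d' 1) - X (j + 1) * D (monomial d' 1)
        = monomial d 1 := by rw [hleib]; ring
    rwa [show D.toLinearMap (X (j + 1) * monomial d' 1)
      = D (X (j + 1) * monomial d' 1) from rfl, heq] at hsub

private lemma cc_D (D : Derivation ℚ (MvPolynomial ℕ ℚ) (MvPolynomial ℕ ℚ))
    (hD1 : D (X 0) = 0) (hD : ∀ j : ℕ, D (X (j + 1)) = X j) (P : MvPolynomial ℕ ℚ) :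
    constantCoeff (D P) = 0 := by
  induction P using MvPolynomial.induction_on with
  | C a => rw [derivation_C]; simp
  | add p q hp hq => rw [map_add, map_add, hp, hq, add_zero]
  | mul_X p i hp =>
    rw [Derivation.leibniz, smul_eq_mul, smul_eq_mul, map_add, map_mul, map_mul, hp,
      mul_zero, add_zero]
    rcases i with _ | m
    · rw [hD1]; simp
    · rw [hD m, constantCoeff_X, mul_zero]

/-- Let `H = ℚ[z₁, z₂, …]` (variable `X j` stands for `z_{j+1}`) with derivation
`∂(z_j) = z_{j-1}` for `j > 1` and `∂(z₁) = 0`. Then the image of `∂` equals the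
kernel of the constant-term homomorphism `ε`. -/
theorem deriv_range_eq_ker_constantCoeff
    (D : Derivation ℚ (MvPolynomial ℕ ℚ) (MvPolynomial ℕ ℚ))
    (hD1 : D (X 0) = 0) (hD : ∀ j : ℕ, D (X (j + 1)) = X j) :
    Set.range ⇑D = {P : MvPolynomial ℕ ℚ | constantCoeff P = 0} := by
  ext P
  simp only [Set.mem_range, Set.mem_setOf_eq]
  constructor
  · rintro ⟨Q, rfl⟩
    exact cc_D D hD1 hD Q
  · intro hP
    have hPm : P ∈ LinearMap.range D.toLinearMap := by
      rw [as_sum P]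
      refine Submodule.sum_mem _ fun d hd => ?_
      have hd0 : d ≠ 0 := by
        rintro rfl
        exact (Finsupp.mem_support_iff.mp hd) hP
      have hne : d.support.Nonempty := Finsupp.support_nonempty_iff.mpr hd0
      have hkey := key D hD1 hD (wt d) d hne (by omega)
      rw [show (monomial d (coeff d P) : MvPolynomial ℕ ℚ)
        = coeff d P • monomial d 1 from by rw [smul_monomial, smul_eq_mul, mul_one]]
      exact Submodule.smul_mem _ _ hkey
    obtain ⟨Q, hQ⟩ := hPm
    exact ⟨Q, hQ⟩
end

section
/- Newton-type recursion: define classes z_k in ℚ[y₁, y₂, …] by z_k = (-1)^{k-1} y_k/(k-1)! + ∑_{i=1}^{k-1} ((-1)^{i+k-1} i!/k!) y_{k-i} z_i for k ≥ 1. Fix r ∈ ℚ and let ∂ be the derivation on ℚ[y₁, y₂, …] with ∂(y_j) = (r - j + 1) y_{j-1} for all j ≥ 1 (with y₀ = 1). Then ∂(z₁) = r and ∂(z_j) = z_{j-1} for all j > 1. -/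
open MvPolynomial

/-- In `ℚ[y₁, y₂, …]`, `yGen j` denotes `y_j`, with `y₀ = 1`
(variable `X (j-1)` stands for `y_j` for `j ≥ 1`). -/
noncomputable def yGen (j : ℕ) : MvPolynomial ℕ ℚ :=
  if j = 0 then 1 else X (j - 1)

private lemma DC (D : Derivation ℚ (MvPolynomial ℕ ℚ) (MvPolynomial ℕ ℚ)) (c : ℚ)
    (p : MvPolynomial ℕ ℚ) : D (C c * p) = C c * D p := by
  rw [← smul_eq_C_mul, D.map_smul, smul_eq_C_mul]

set_option maxHeartbeats 1000000 in
/-- Newton-type recursion: if `z_k = (-1)^{k-1} y_k/(k-1)! +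
∑_{i=1}^{k-1} ((-1)^{i+k-1} i!/k!) y_{k-i} z_i` for `k ≥ 1`, and `∂` is the derivation
with `∂(y_j) = (r - j + 1) y_{j-1}` (with `y₀ = 1`), then `∂(z₁) = r` and
`∂(z_j) = z_{j-1}` for `j > 1`. -/
theorem newton_recursion_deriv (r : ℚ)
    (D : Derivation ℚ (MvPolynomial ℕ ℚ) (MvPolynomial ℕ ℚ))
    (hD : ∀ j : ℕ, 1 ≤ j → D (yGen j) = C (r - (j : ℚ) + 1) * yGen (j - 1))
    (z : ℕ → MvPolynomial ℕ ℚ)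
    (hz : ∀ k : ℕ, 1 ≤ k →
      z k = C ((-1 : ℚ) ^ (k - 1) / (Nat.factorial (k - 1) : ℚ)) * yGen k +
        ∑ i ∈ Finset.Ico 1 k,
          C ((-1 : ℚ) ^ (i + k - 1) * (Nat.factorial i : ℚ) / (Nat.factorial k : ℚ)) *
            (yGen (k - i) * z i)) :
    D (z 1) = C r ∧ ∀ j : ℕ, 1 < j → D (z j) = z (j - 1) := by
  have ez : ∀ n : ℕ, z (n+1) = C ((-1:ℚ)^n / (Nat.factorial n : ℚ)) * yGen (n+1) +
      ∑ i ∈ Finset.range n, C ((-1:ℚ)^(i+n+1) * (Nat.factorial (i+1) : ℚ) /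
        (Nat.factorial (n+1) : ℚ)) * (yGen (n-i) * z (i+1)) := by
    intro n
    rw [hz (n+1) (by omega), Finset.sum_Ico_eq_sum_range]
    congr 1
    apply Finset.sum_congr rfl
    intro i hi
    rw [show (1+i)+(n+1)-1 = i+n+1 from by omega, show (n+1)-(1+i) = n-i from by omega,
      show 1+i = i+1 from by omega]
  have h1 : z 1 = yGen 1 := by
    rw [hz 1 le_rfl]; simp
  have hD1 : D (z 1) = C r := by
    rw [h1, hD 1 le_rfl]
    simp [yGen]
  refine ⟨hD1, ?_⟩
  have step : ∀ m : ℕ, (∀ i, 2 ≤ i → i < m + 2 → D (z i) = z (i - 1)) →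
      D (z (m + 2)) = z (m + 1) := by
    intro m IH
    have expand : D (z (m + 2)) =
        C ((-1:ℚ)^(m+1) / (Nat.factorial (m+1) : ℚ)) * (C (r - ((m:ℚ)+2) + 1) * yGen (m+1)) +
        ∑ i ∈ Finset.range (m+1),
          C ((-1:ℚ)^(i+m+2) * (Nat.factorial (i+1) : ℚ) / (Nat.factorial (m+2) : ℚ)) *
            (yGen (m+1-i) * D (z (i+1)) +
              z (i+1) * (C (r - ((m:ℚ)+1-(i:ℚ)) + 1) * yGen (m-i))) := by
      rw [show m + 2 = m + 1 + 1 from rfl, ez (m+1), map_add, DC, map_sum]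
      have hDC0 : ∀ c : ℚ, D (C c) = 0 := fun c => by
        rw [← MvPolynomial.algebraMap_eq]; exact Derivation.map_algebraMap D c
      simp only [DC, Derivation.leibniz, smul_eq_mul, hDC0, mul_zero, zero_mul, add_zero]
      rw [hD (m+1+1) (by omega)]
      congr 1
      · rw [show ((m+1+1 : ℕ):ℚ) = (m:ℚ)+2 from by push_cast; ring,
          show m+1+1-1 = m+1 from rfl]
      · apply Finset.sum_congr rfl
        intro i hi
        simp only [Finset.mem_range] at hi
        rw [hD (m+1-i) (by omega), show (m+1-i)-1 = m-i from by omega,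
          show ((m+1-i : ℕ):ℚ) = (m:ℚ)+1-(i:ℚ) from by
            rw [Nat.cast_sub (by omega)]; push_cast; ring,
          show i+(m+1)+1 = i+m+2 from by omega]
    rw [expand]
    simp only [mul_add, Finset.sum_add_distrib]
    rw [Finset.sum_range_succ', Finset.sum_range_succ]
    rw [ez m]
    have e1 : ∑ k ∈ Finset.range m,
        C ((-1:ℚ)^(k+1+m+2) * (Nat.factorial (k+1+1) : ℚ) / (Nat.factorial (m+2) : ℚ)) *
          (yGen (m+1-(k+1)) * D (z (k+1+1))) =
        ∑ k ∈ Finset.range m,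
        C ((-1:ℚ)^(k+m+3) * (Nat.factorial (k+2) : ℚ) / (Nat.factorial (m+2) : ℚ)) *
          (yGen (m-k) * z (k+1)) := by
      refine Finset.sum_congr rfl fun k hk => ?_
      simp only [Finset.mem_range] at hk
      rw [IH (k+1+1) (by omega) (by omega), show k+1+1-1 = k+1 from rfl,
        show k+1+m+2 = k+m+3 from by omega, show m+1-(k+1) = m-k from by omega,
        show k+1+1 = k+2 from rfl]
    rw [e1]
    rw [show D (z (0+1)) = C r from hD1, show m+1-0 = m+1 from rfl,
      show (0:ℕ)+m+2 = m+2 from by omega]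
    rw [show m-m = 0 from by omega, show yGen 0 = (1 : MvPolynomial ℕ ℚ) from rfl,
      show r - ((m:ℚ)+1-(m:ℚ)) + 1 = r from by ring]
    have hsumEq :
        (∑ k ∈ Finset.range m, C ((-1:ℚ)^(k+m+3) * (Nat.factorial (k+2):ℚ)/(Nat.factorial (m+2):ℚ)) * (yGen (m-k) * z (k+1)))
      + (∑ k ∈ Finset.range m, C ((-1:ℚ)^(k+m+2) * (Nat.factorial (k+1):ℚ)/(Nat.factorial (m+2):ℚ)) * (z (k+1) * (C (r - ((m:ℚ)+1-(k:ℚ))+1) * yGen (m-k))))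
      + C ((-1:ℚ)^(m+m+2) * (Nat.factorial (m+1):ℚ)/(Nat.factorial (m+2):ℚ)) * C r *
          (∑ k ∈ Finset.range m, C ((-1:ℚ)^(k+m+1) * (Nat.factorial (k+1):ℚ)/(Nat.factorial (m+1):ℚ)) * (yGen (m-k) * z (k+1)))
      = ∑ k ∈ Finset.range m, C ((-1:ℚ)^(k+m+1) * (Nat.factorial (k+1):ℚ)/(Nat.factorial (m+1):ℚ)) * (yGen (m-k) * z (k+1)) := by
      rw [Finset.mul_sum, ← Finset.sum_add_distrib, ← Finset.sum_add_distrib]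
      refine Finset.sum_congr rfl fun k hk => ?_
      have key : ((-1:ℚ)^(k+m+3) * (Nat.factorial (k+2):ℚ)/(Nat.factorial (m+2):ℚ))
          + ((-1:ℚ)^(k+m+2) * (Nat.factorial (k+1):ℚ)/(Nat.factorial (m+2):ℚ)) * (r - ((m:ℚ)+1-(k:ℚ))+1)
          + ((-1:ℚ)^(m+m+2) * (Nat.factorial (m+1):ℚ)/(Nat.factorial (m+2):ℚ)) * r * ((-1:ℚ)^(k+m+1) * (Nat.factorial (k+1):ℚ)/(Nat.factorial (m+1):ℚ))
          = (-1:ℚ)^(k+m+1) * (Nat.factorial (k+1):ℚ)/(Nat.factorial (m+1):ℚ) := by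
        rw [show k+m+3 = (k+m+1)+2 from by omega, show k+m+2 = (k+m+1)+1 from by omega,
          show m+m+2 = 2*(m+1) from by omega, pow_add, pow_succ, pow_mul]
        have f1 : (Nat.factorial (k+2):ℚ) = ((k:ℚ)+2) * Nat.factorial (k+1) := by
          rw [show k+2 = (k+1)+1 from rfl, Nat.factorial_succ]; push_cast; ring
        have f2 : (Nat.factorial (m+2):ℚ) = ((m:ℚ)+2) * Nat.factorial (m+1) := by
          rw [show m+2 = (m+1)+1 from rfl, Nat.factorial_succ]; push_cast; ring
        rw [f1, f2]
        have nz1 : (Nat.factorial (m+1):ℚ) ≠ 0 := by positivity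
        have nz2 : ((m:ℚ)+2) ≠ 0 := by positivity
        field_simp
        ring
      have h' : C ((-1:ℚ)^(k+m+3) * (Nat.factorial (k+2):ℚ)/(Nat.factorial (m+2):ℚ))
          + C ((-1:ℚ)^(k+m+2) * (Nat.factorial (k+1):ℚ)/(Nat.factorial (m+2):ℚ)) * C (r - ((m:ℚ)+1-(k:ℚ))+1)
          + C ((-1:ℚ)^(m+m+2) * (Nat.factorial (m+1):ℚ)/(Nat.factorial (m+2):ℚ)) * C r * C ((-1:ℚ)^(k+m+1) * (Nat.factorial (k+1):ℚ)/(Nat.factorial (m+1):ℚ))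
          = (C ((-1:ℚ)^(k+m+1) * (Nat.factorial (k+1):ℚ)/(Nat.factorial (m+1):ℚ)) : MvPolynomial ℕ ℚ) := by
        simp only [← C_mul, ← C_add]
        rw [key]
      linear_combination (yGen (m-k) * z (k+1)) * h'
    have keyY : ((-1:ℚ)^(m+1)/(Nat.factorial (m+1):ℚ)) * (r - ((m:ℚ)+2) + 1)
        + ((-1:ℚ)^(m+2) * (Nat.factorial (0+1):ℚ)/(Nat.factorial (m+2):ℚ)) * r
        + ((-1:ℚ)^(m+m+2) * (Nat.factorial (m+1):ℚ)/(Nat.factorial (m+2):ℚ)) * r * ((-1:ℚ)^m/(Nat.factorial m:ℚ))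
        = (-1:ℚ)^m/(Nat.factorial m:ℚ) := by
      rw [show m+1 = m+1 from rfl, show m+2 = (m+1)+1 from rfl, show m+m+2 = 2*(m+1) from by omega,
        pow_succ, pow_succ, pow_mul]
      have f2 : (Nat.factorial (m+1+1):ℚ) = ((m:ℚ)+2) * (((m:ℚ)+1) * Nat.factorial m) := by
        rw [Nat.factorial_succ, Nat.factorial_succ]; push_cast; ring
      have f1 : (Nat.factorial (m+1):ℚ) = ((m:ℚ)+1) * Nat.factorial m := by
        rw [Nat.factorial_succ]; push_cast; ring
      rw [f2, f1]
      have nz0 : (Nat.factorial m:ℚ) ≠ 0 := by positivity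
      have nz1 : ((m:ℚ)+1) ≠ 0 := by positivity
      have nz2 : ((m:ℚ)+2) ≠ 0 := by positivity
      field_simp
      ring
    have hY : C ((-1:ℚ)^(m+1)/(Nat.factorial (m+1):ℚ)) * (C (r - ((m:ℚ)+2) + 1) * yGen (m+1))
        + C ((-1:ℚ)^(m+2) * (Nat.factorial (0+1):ℚ)/(Nat.factorial (m+2):ℚ)) * (yGen (m+1) * C r)
        + C ((-1:ℚ)^(m+m+2) * (Nat.factorial (m+1):ℚ)/(Nat.factorial (m+2):ℚ)) * C r * (C ((-1:ℚ)^m/(Nat.factorial m:ℚ)) * yGen (m+1))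
        = C ((-1:ℚ)^m/(Nat.factorial m:ℚ)) * yGen (m+1) := by
      have h' : C ((-1:ℚ)^(m+1)/(Nat.factorial (m+1):ℚ)) * C (r - ((m:ℚ)+2) + 1)
          + C ((-1:ℚ)^(m+2) * (Nat.factorial (0+1):ℚ)/(Nat.factorial (m+2):ℚ)) * C r
          + C ((-1:ℚ)^(m+m+2) * (Nat.factorial (m+1):ℚ)/(Nat.factorial (m+2):ℚ)) * C r * C ((-1:ℚ)^m/(Nat.factorial m:ℚ))
          = (C ((-1:ℚ)^m/(Nat.factorial m:ℚ)) : MvPolynomial ℕ ℚ) := by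
        simp only [← C_mul, ← C_add]
        rw [keyY]
      linear_combination yGen (m+1) * h'
    linear_combination hsumEq + hY
  have main : ∀ j, ∀ i, 2 ≤ i → i ≤ j → D (z i) = z (i - 1) := by
    intro j
    induction j with
    | zero => intro i h1 h2; omega
    | succ n ih =>
      intro i h2 hle
      rcases Nat.lt_or_ge i (n + 1) with h | h
      · exact ih i h2 (by omega)
      · have hi : i = n + 1 := by omega
        subst hi
        obtain ⟨m, hm⟩ : ∃ m, n + 1 = m + 2 := ⟨n - 1, by omega⟩
        rw [hm]
        exact step m (fun i hi2 hilt => ih i hi2 (by omega))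
  intro j hj
  exact main j j (by omega) le_rfl
end
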